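/- Let G be a graph and p ∈ (0,1), and consider the random subgraph G_p obtained by retaining each edge independently with probability p. For any edge uv of a d-regular graph G, the probability that both u and v have degree less than k in G_p is at most P(Bin(d,p) < k) · P(Bin(d-1,p) < k). -/

import Mathlib

open MeasureTheory Finset
open scoped ENNReal

set_option linter.unusedSectionVars false

/-- Every set of percolation configurations on a finite edge set is measurable. -/
lemma measAll {β : Type*} [Finite β] (S : Set (β → Bool)) : MeasurableSet S := by
  have hsing : ∀ f : β → Bool, MeasurableSet ({f} : Set (β → Bool)) := by
    intro f
    rw [← Set.univ_pi_singleton]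
    exact MeasurableSet.univ_pi fun i => measurableSet_singleton _
  rw [← Set.biUnion_of_singleton S]
  exact MeasurableSet.biUnion (Set.to_countable S) fun f _ => hsing f

/-- Splitting a product measure over a partition of the coordinates. -/
lemma prodSplit {α : Type*} [Fintype α] (m : Measure Bool) [IsProbabilityMeasure m]
    (q1 : α → Prop) [DecidablePred q1]
    (T1 : Set ({a // q1 a} → Bool)) (T2 : Set ({a // ¬ q1 a} → Bool)) :
    Measure.pi (fun _ : α => m)
      {ω : α → Bool | (fun x : {a // q1 a} => ω x.val) ∈ T1 ∧
        (fun x : {a // ¬ q1 a} => ω x.val) ∈ T2}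
      = Measure.pi (fun _ : {a // q1 a} => m) T1 * Measure.pi (fun _ : {a // ¬ q1 a} => m) T2 := by
  have hmp := measurePreserving_piEquivPiSubtypeProd (fun _ : α => m) q1
  have hset : {ω : α → Bool | (fun x : {a // q1 a} => ω x.val) ∈ T1 ∧
      (fun x : {a // ¬ q1 a} => ω x.val) ∈ T2}
      = (MeasurableEquiv.piEquivPiSubtypeProd (fun _ : α => Bool) q1) ⁻¹' (T1 ×ˢ T2) := rfl
  rw [hset, hmp.measure_preimage ((measAll T1).prod (measAll T2)).nullMeasurableSet,
    Measure.prod_prod]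

lemma fiber_card {α : Type*} [Fintype α] [DecidableEq α] (i : ℕ) :
    (Finset.univ.filter fun σ : α → Bool =>
      (Finset.univ.filter fun a => σ a = true).card = i).card = (Fintype.card α).choose i := by
  rw [← Finset.card_univ, ← Finset.card_powersetCard]
  apply Finset.card_bij' (fun σ _ => Finset.univ.filter fun a => σ a = true)
    (fun s _ => fun a => decide (a ∈ s))
  case hi =>
    intro σ hσ
    simp only [Finset.mem_filter, Finset.mem_univ, true_and] at hσ
    simp [Finset.mem_powersetCard, hσ]
  case hj =>
    intro s hs
    simp only [Finset.mem_powersetCard] at hs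
    simp only [Finset.mem_filter, Finset.mem_univ, true_and]
    rw [← hs.2]
    congr 1
    ext a
    simp
  case left_inv =>
    intro σ hσ
    funext a
    by_cases h : σ a = true <;> simp [h]
  case right_inv =>
    intro s hs
    ext a
    simp

lemma pi_singleton {α : Type*} [Fintype α] [DecidableEq α] (q : NNReal) (hq : q ≤ 1)
    (σ : α → Bool) :
    Measure.pi (fun _ : α => (PMF.bernoulli q hq).toMeasure) {σ}
      = (q : ℝ≥0∞) ^ (Finset.univ.filter fun a => σ a = true).card *
        (1 - (q : ℝ≥0∞)) ^ (Fintype.card α - (Finset.univ.filter fun a => σ a = true).card) := by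
  rw [← Set.univ_pi_singleton σ, Measure.pi_pi]
  have h : ∀ a : α, (PMF.bernoulli q hq).toMeasure {σ a}
      = cond (σ a) (q : ℝ≥0∞) (1 - (q : ℝ≥0∞)) := by
    intro a
    rw [PMF.toMeasure_apply_singleton _ _ (measurableSet_singleton _)]
    cases σ a <;> simp [PMF.bernoulli_apply, ENNReal.coe_sub]
  simp_rw [h]
  rw [← Finset.prod_filter_mul_prod_filter_not Finset.univ (fun a => σ a = true)]
  have h1 : ∀ a ∈ Finset.univ.filter fun a => σ a = true, cond (σ a) (q : ℝ≥0∞) (1-(q : ℝ≥0∞)) = (q : ℝ≥0∞) := by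
    intro a ha; simp only [Finset.mem_filter] at ha; rw [ha.2]; rfl
  have h2 : ∀ a ∈ Finset.univ.filter fun a => ¬ σ a = true, cond (σ a) (q : ℝ≥0∞) (1-(q : ℝ≥0∞)) = 1 - (q : ℝ≥0∞) := by
    intro a ha; simp only [Finset.mem_filter, Bool.not_eq_true] at ha; rw [ha.2]; rfl
  rw [Finset.prod_congr rfl h1, Finset.prod_congr rfl h2, Finset.prod_const, Finset.prod_const]
  congr 1
  congr 1
  have := Finset.card_filter_add_card_filter_not (s := (Finset.univ : Finset α))
    (p := fun a => σ a = true)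
  rw [Finset.card_univ] at this
  omega

/-- The measure of the event that fewer than `k` of the independent Bernoulli coordinates
come up `true` is the binomial tail. -/
lemma pi_count_lt {α : Type*} [Fintype α] [DecidableEq α] (q : NNReal) (hq : q ≤ 1) (k : ℕ) :
    Measure.pi (fun _ : α => (PMF.bernoulli q hq).toMeasure)
      {σ : α → Bool | (Finset.univ.filter fun a => σ a = true).card < k}
      = ∑ i ∈ Finset.range k,
          ((Fintype.card α).choose i : ℝ≥0∞) * (q : ℝ≥0∞) ^ i * (1 - (q : ℝ≥0∞)) ^ (Fintype.card α - i) := by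
  classical
  set μ := Measure.pi (fun _ : α => (PMF.bernoulli q hq).toMeasure)
  set c : (α → Bool) → ℕ := fun σ => (Finset.univ.filter fun a => σ a = true).card with hc
  set S : Set (α → Bool) := {σ | c σ < k} with hS
  have hconv : S = ⋃ σ ∈ (Finset.univ.filter fun σ => c σ < k), ({σ} : Set (α → Bool)) := by
    ext σ; simp [hS]
  have hsum : μ S = ∑ σ ∈ Finset.univ.filter fun σ => c σ < k, μ {σ} := by
    rw [hconv, measure_biUnion_finset ?_ (fun b _ => measAll {b})]
    intro x _ y _ hxy
    simp [Function.onFun, Set.disjoint_singleton, hxy]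
  rw [hsum]
  have hgroup := Finset.sum_fiberwise_of_maps_to (g := c)
    (s := Finset.univ.filter fun σ => c σ < k) (t := Finset.range k)
    (fun x hx => by simp only [Finset.mem_filter] at hx; simpa using hx.2)
    (fun σ => μ {σ})
  rw [← hgroup]
  apply Finset.sum_congr rfl
  intro i hi
  have hfil : ((Finset.univ.filter fun σ => c σ < k).filter fun σ => c σ = i)
      = Finset.univ.filter fun σ => c σ = i := by
    rw [Finset.filter_filter]
    apply Finset.filter_congr
    intro σ _
    simp only [Finset.mem_range] at hi
    constructor
    · exact fun h => h.2
    · exact fun h => ⟨h ▸ hi, h⟩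
  rw [hfil]
  have hterm : ∀ σ ∈ Finset.univ.filter fun σ => c σ = i,
      μ {σ} = (q : ℝ≥0∞) ^ i * (1 - (q : ℝ≥0∞)) ^ (Fintype.card α - i) := by
    intro σ hσ
    simp only [Finset.mem_filter] at hσ
    rw [show μ {σ} = _ from pi_singleton q hq σ]
    rw [show (Finset.univ.filter fun a => σ a = true).card = i from hσ.2]
  rw [Finset.sum_congr rfl hterm, Finset.sum_const, fiber_card i, nsmul_eq_mul, mul_assoc]

lemma ncard_helper {α : Type*} [Fintype α] (pr : α → Prop) [DecidablePred pr] (ω : α → Bool) :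
    {a : α | pr a ∧ ω a = true}.ncard
      = (Finset.univ.filter fun x : {a // pr a} => ω x.val = true).card := by
  classical
  rw [← Nat.card_coe_set_eq,
    ← Fintype.card_subtype (p := fun x : {a // pr a} => ω x.val = true),
    ← Nat.card_eq_fintype_card]
  exact Nat.card_congr (Equiv.subtypeSubtypeEquivSubtypeInter pr (fun a => ω a = true)).symm

section Graph
variable {V : Type*} [Fintype V] [DecidableEq V] (G : SimpleGraph V)
    [DecidableRel G.Adj] [Fintype G.edgeSet]

lemma cardA1 (u : V) : Nat.card {e : G.edgeSet // u ∈ (e : Sym2 V)} = G.degree u := by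
  classical
  have h1 : Nat.card {e : G.edgeSet // u ∈ (e : Sym2 V)} = Nat.card (G.incidenceSet u) :=
    Nat.card_congr (Equiv.subtypeSubtypeEquivSubtypeInter (· ∈ G.edgeSet) (u ∈ ·))
  rw [h1, Nat.card_eq_fintype_card]
  exact G.card_incidenceSet_eq_degree u

lemma cardD (u v : V) (huv : G.Adj u v) :
    Nat.card {x : {e : G.edgeSet // ¬ u ∈ (e : Sym2 V)} // v ∈ (x.val : Sym2 V)}
      = G.degree v - 1 := by
  classical
  have h1 : Nat.card {x : {e : G.edgeSet // ¬ u ∈ (e : Sym2 V)} // v ∈ (x.val : Sym2 V)}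
      = Nat.card {e : G.edgeSet // ¬ u ∈ (e : Sym2 V) ∧ v ∈ (e : Sym2 V)} :=
    Nat.card_congr (Equiv.subtypeSubtypeEquivSubtypeInter
      (fun e : G.edgeSet => ¬ u ∈ (e : Sym2 V)) (fun e : G.edgeSet => v ∈ (e : Sym2 V)))
  rw [h1, Nat.card_eq_fintype_card, Fintype.card_subtype]
  have hsplit := Finset.card_filter_add_card_filter_not
    (s := Finset.univ.filter fun e : G.edgeSet => v ∈ (e : Sym2 V))
    (p := fun e : G.edgeSet => u ∈ (e : Sym2 V))
  rw [Finset.filter_filter, Finset.filter_filter] at hsplit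
  have hdeg : (Finset.univ.filter fun e : G.edgeSet => v ∈ (e : Sym2 V)).card = G.degree v := by
    rw [← Fintype.card_subtype, ← Nat.card_eq_fintype_card]
    exact cardA1 G v
  have hone : (Finset.univ.filter fun e : G.edgeSet =>
      v ∈ (e : Sym2 V) ∧ u ∈ (e : Sym2 V)).card = 1 := by
    rw [Finset.card_eq_one]
    refine ⟨⟨s(u, v), huv⟩, ?_⟩
    ext e
    simp only [Finset.mem_filter, Finset.mem_univ, true_and, Finset.mem_singleton]
    rw [Sym2.mem_and_mem_iff huv.ne', Subtype.ext_iff]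
    constructor
    · intro h; rw [h]; exact Sym2.eq_swap
    · intro h; rw [h]; exact Sym2.eq_swap
  have heq : (Finset.univ.filter fun e : G.edgeSet =>
        ¬ u ∈ (e : Sym2 V) ∧ v ∈ (e : Sym2 V)).card
      = (Finset.univ.filter fun e : G.edgeSet =>
        v ∈ (e : Sym2 V) ∧ ¬ u ∈ (e : Sym2 V)).card := by
    congr 1
    apply Finset.filter_congr
    intro e _
    exact and_comm
  rw [heq]
  rw [hdeg, hone] at hsplit
  omega

end Graph

/-- The number of retained edges incident to `u` in the percolation configuration `ω`. -/
noncomputable def percDeg {V : Type*} (G : SimpleGraph V) (ω : G.edgeSet → Bool) (u : V) : ℕ :=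
  {e : G.edgeSet | u ∈ (e : Sym2 V) ∧ ω e = true}.ncard

/-- For an edge `uv` of a `d`-regular graph `G`, in bond percolation with parameter `p`,
the probability that both `u` and `v` have degree less than `k` is at most
`P(Bin(d,p) < k) · P(Bin(d-1,p) < k)`. -/
theorem stmt_4 {V : Type*} [Fintype V] [DecidableEq V] (G : SimpleGraph V)
    [DecidableRel G.Adj] [Fintype G.edgeSet] (d k : ℕ) (hk : 1 ≤ k)
    (hreg : ∀ w : V, G.degree w = d) (p : ℝ) (hp0 : 0 < p) (hp1 : p < 1)
    (u v : V) (huv : G.Adj u v) :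
    (Measure.pi fun _ : G.edgeSet =>
        (PMF.bernoulli (Real.toNNReal p) (Real.toNNReal_le_one.mpr hp1.le)).toMeasure)
      {ω : G.edgeSet → Bool | percDeg G ω u < k ∧ percDeg G ω v < k} ≤
    ENNReal.ofReal
      ((∑ i ∈ Finset.range k, (d.choose i : ℝ) * p ^ i * (1 - p) ^ (d - i)) *
        (∑ i ∈ Finset.range k, ((d - 1).choose i : ℝ) * p ^ i * (1 - p) ^ (d - 1 - i))) := by
  classical
  set q : ℝ≥0∞ := ENNReal.ofReal p with hqdef
  have hq : q ≤ 1 := ENNReal.ofReal_le_one.mpr hp1.le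
  set q0 : NNReal := Real.toNNReal p with hq0def
  have hq0 : q0 ≤ 1 := Real.toNNReal_le_one.mpr hp1.le
  set μ := Measure.pi (fun _ : G.edgeSet => (PMF.bernoulli q0 hq0).toMeasure) with hμ
  set q1 : G.edgeSet → Prop := fun e => u ∈ (e : Sym2 V) with hq1
  set q2 : {a : G.edgeSet // ¬ q1 a} → Prop := fun x => v ∈ (x.val : Sym2 V) with hq2
  set T1 : Set ({a : G.edgeSet // q1 a} → Bool) :=
    {σ | (Finset.univ.filter fun x => σ x = true).card < k} with hT1
  set C : Set ({x : {a : G.edgeSet // ¬ q1 a} // q2 x} → Bool) :=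
    {ρ | (Finset.univ.filter fun x => ρ x = true).card < k} with hC
  set T2 : Set ({a : G.edgeSet // ¬ q1 a} → Bool) :=
    {τ | (fun x : {x // q2 x} => τ x.val) ∈ C} with hT2
  -- inclusion of events
  have hsub : {ω : G.edgeSet → Bool | percDeg G ω u < k ∧ percDeg G ω v < k}
      ⊆ {ω : G.edgeSet → Bool | (fun x : {a // q1 a} => ω x.val) ∈ T1 ∧
          (fun x : {a // ¬ q1 a} => ω x.val) ∈ T2} := by
    intro ω hω
    obtain ⟨h1, h2⟩ := hω
    constructor
    · show (Finset.univ.filter fun x : {a // q1 a} => ω x.val = true).card < k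
      rw [← ncard_helper q1 ω]
      exact h1
    · show (Finset.univ.filter fun x : {x // q2 x} => ω x.val.val = true).card < k
      have hle : (Finset.univ.filter fun x : {x // q2 x} => ω x.val.val = true).card
          ≤ percDeg G ω v := by
        rw [← Fintype.card_subtype, ← Nat.card_eq_fintype_card]
        unfold percDeg
        rw [← Nat.card_coe_set_eq]
        exact Nat.card_le_card_of_injective
          (fun x => ⟨x.val.val.val, ⟨x.val.prop, x.prop⟩⟩)
          (fun a b h => by
            rw [Subtype.mk.injEq] at h
            apply Subtype.ext; apply Subtype.ext
            exact Subtype.ext h)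
      exact lt_of_le_of_lt hle h2
  have hmono := measure_mono (μ := μ) hsub
  -- split the measure
  have hsplit : μ {ω : G.edgeSet → Bool | (fun x : {a // q1 a} => ω x.val) ∈ T1 ∧
      (fun x : {a // ¬ q1 a} => ω x.val) ∈ T2}
      = (Measure.pi fun _ : {a // q1 a} => (PMF.bernoulli q0 hq0).toMeasure) T1 *
        (Measure.pi fun _ : {a // ¬ q1 a} => (PMF.bernoulli q0 hq0).toMeasure) T2 :=
    prodSplit _ q1 T1 T2
  have hT2split : (Measure.pi fun _ : {a // ¬ q1 a} => (PMF.bernoulli q0 hq0).toMeasure) T2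
      = (Measure.pi fun _ : {x // q2 x} => (PMF.bernoulli q0 hq0).toMeasure) C := by
    have h0 : T2 = {τ : {a // ¬ q1 a} → Bool | (fun x : {x // q2 x} => τ x.val) ∈ C ∧
        (fun x : {x // ¬ q2 x} => τ x.val) ∈ (Set.univ : Set ({x // ¬ q2 x} → Bool))} := by
      ext τ; simp [hT2]
    rw [h0, prodSplit _ q2 C Set.univ, measure_univ, mul_one]
  -- binomial values
  have hcard1 : Fintype.card {a : G.edgeSet // q1 a} = d := by
    rw [← Nat.card_eq_fintype_card]
    rw [show Nat.card {a : G.edgeSet // q1 a}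
        = Nat.card {e : G.edgeSet // u ∈ (e : Sym2 V)} from rfl]
    rw [cardA1 G u, hreg u]
  have hcard2 : Fintype.card {x : {a : G.edgeSet // ¬ q1 a} // q2 x} = d - 1 := by
    rw [← Nat.card_eq_fintype_card]
    rw [show Nat.card {x : {a : G.edgeSet // ¬ q1 a} // q2 x}
        = Nat.card {x : {e : G.edgeSet // ¬ u ∈ (e : Sym2 V)} // v ∈ (x.val : Sym2 V)} from rfl]
    rw [cardD G u v huv, hreg v]
  have hv1 : (Measure.pi fun _ : {a // q1 a} => (PMF.bernoulli q0 hq0).toMeasure) T1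
      = ∑ i ∈ Finset.range k, ((d.choose i : ℝ≥0∞)) * q ^ i * (1 - q) ^ (d - i) := by
    rw [hT1, pi_count_lt q0 hq0 k, hcard1]
    rfl
  have hv2 : (Measure.pi fun _ : {x // q2 x} => (PMF.bernoulli q0 hq0).toMeasure) C
      = ∑ i ∈ Finset.range k, (((d - 1).choose i : ℝ≥0∞)) * q ^ i * (1 - q) ^ (d - 1 - i) := by
    rw [hC, pi_count_lt q0 hq0 k, hcard2]
    rfl
  -- ENNReal arithmetic
  have h1q : (1 : ℝ≥0∞) - q = ENNReal.ofReal (1 - p) := by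
    rw [ENNReal.ofReal_sub _ hp0.le, ENNReal.ofReal_one]
  have hterm : ∀ (n : ℕ) (i : ℕ),
      ((n.choose i : ℝ≥0∞)) * q ^ i * (1 - q) ^ (n - i)
        = ENNReal.ofReal ((n.choose i : ℝ) * p ^ i * (1 - p) ^ (n - i)) := by
    intro n i
    rw [ENNReal.ofReal_mul (by positivity), ENNReal.ofReal_mul (by positivity),
      ENNReal.ofReal_pow hp0.le, ENNReal.ofReal_pow (by linarith), ENNReal.ofReal_natCast, h1q]
  have hsum1 : (∑ i ∈ Finset.range k, ((d.choose i : ℝ≥0∞)) * q ^ i * (1 - q) ^ (d - i))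
      = ENNReal.ofReal (∑ i ∈ Finset.range k, (d.choose i : ℝ) * p ^ i * (1 - p) ^ (d - i)) := by
    rw [ENNReal.ofReal_sum_of_nonneg (fun i _ => mul_nonneg (mul_nonneg (Nat.cast_nonneg _) (pow_nonneg hp0.le _)) (pow_nonneg (by linarith) _))]
    exact Finset.sum_congr rfl fun i _ => hterm d i
  have hsum2 : (∑ i ∈ Finset.range k, (((d - 1).choose i : ℝ≥0∞)) * q ^ i * (1 - q) ^ (d - 1 - i))
      = ENNReal.ofReal
        (∑ i ∈ Finset.range k, ((d - 1).choose i : ℝ) * p ^ i * (1 - p) ^ (d - 1 - i)) := by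
    rw [ENNReal.ofReal_sum_of_nonneg (fun i _ => mul_nonneg (mul_nonneg (Nat.cast_nonneg _) (pow_nonneg hp0.le _)) (pow_nonneg (by linarith) _))]
    exact Finset.sum_congr rfl fun i _ => hterm (d - 1) i
  have hfin : ENNReal.ofReal
      ((∑ i ∈ Finset.range k, (d.choose i : ℝ) * p ^ i * (1 - p) ^ (d - i)) *
        (∑ i ∈ Finset.range k, ((d - 1).choose i : ℝ) * p ^ i * (1 - p) ^ (d - 1 - i)))
      = (∑ i ∈ Finset.range k, ((d.choose i : ℝ≥0∞)) * q ^ i * (1 - q) ^ (d - i)) *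
        (∑ i ∈ Finset.range k, (((d - 1).choose i : ℝ≥0∞)) * q ^ i * (1 - q) ^ (d - 1 - i)) := by
    rw [ENNReal.ofReal_mul (Finset.sum_nonneg fun i _ => mul_nonneg (mul_nonneg (Nat.cast_nonneg _) (pow_nonneg hp0.le _)) (pow_nonneg (by linarith) _)), hsum1, hsum2]
  rw [hfin]
  calc μ {ω : G.edgeSet → Bool | percDeg G ω u < k ∧ percDeg G ω v < k}
      ≤ μ {ω : G.edgeSet → Bool | (fun x : {a // q1 a} => ω x.val) ∈ T1 ∧
          (fun x : {a // ¬ q1 a} => ω x.val) ∈ T2} := hmono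
    _ = _ := by rw [hsplit, hT2split, hv1, hv2]
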